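/- Assume each domain D i is finite and nonempty. Let m ≥ 2 and, for each class j ∈ Fin m, let w^j_1, …, w^j_{p_j} : X → ℝ be tree weight functions with total weights W_j = ∑_k w^j_k. Fix x ∈ X and i ∈ Fin m with W_j(x) < W_i(x) for all j ≠ i. For S ⊆ Fin n let C(S) be the tree-specific condition: for every j ≠ i, ∑_{k=1}^{p_i} min_{x' ∈ Ext(x,S)} w^i_k(x') > ∑_{k=1}^{p_j} max_{x' ∈ Ext(x,S)} w^j_k(x'). Let l be any list containing every element of Fin n and let t be the result of List.foldl (fun t c => if C (t.erase c) then t.erase c else t) (Finset.univ) l. Then C(t) holds and no proper subset of t satisfies C; that is, the greedy algorithm TS returns a tree-specific explanation for x given the boosted tree. -/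

import Mathlib

/-- The set of extensions of `x` on the (finite) set of attributes `S`. -/
def extSetF {n : ℕ} {D : Fin n → Type*} (x : (i : Fin n) → D i) (S : Finset (Fin n)) :
    Set ((i : Fin n) → D i) := {x' | ∀ i ∈ S, x' i = x i}

open Classical in
lemma greedy_aux {n : ℕ} (C : Finset (Fin n) → Prop)
    (mono : ∀ ⦃S T : Finset (Fin n)⦄, S ⊆ T → C S → C T) :
    ∀ (l : List (Fin n)) (s : Finset (Fin n)), C s →
      C (List.foldl (fun t c => if C (t.erase c) then t.erase c else t) s l) ∧
      (List.foldl (fun t c => if C (t.erase c) then t.erase c else t) s l) ⊆ s ∧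
      ∀ c ∈ l, c ∈ (List.foldl (fun t c => if C (t.erase c) then t.erase c else t) s l) →
        ¬ C ((List.foldl (fun t c => if C (t.erase c) then t.erase c else t) s l).erase c) := by
  intro l
  induction l with
  | nil =>
      intro s hs
      exact ⟨hs, Finset.Subset.refl s, fun c hc => absurd hc List.not_mem_nil⟩
  | cons c l ih =>
      intro s hs
      simp only [List.foldl_cons]
      by_cases h : C (s.erase c)
      · rw [if_pos h]
        obtain ⟨h1, h2, h3⟩ := ih (s.erase c) h
        refine ⟨h1, h2.trans (Finset.erase_subset c s), ?_⟩
        intro d hd hdr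
        rcases List.mem_cons.mp hd with rfl | hd'
        · exact absurd (h2 hdr) (Finset.notMem_erase d s)
        · exact h3 d hd' hdr
      · rw [if_neg h]
        obtain ⟨h1, h2, h3⟩ := ih s hs
        refine ⟨h1, h2, ?_⟩
        intro d hd hdr
        rcases List.mem_cons.mp hd with rfl | hd'
        · intro hcr
          exact h (mono (Finset.erase_subset_erase d h2) hcr)
        · exact h3 d hd' hdr

open Classical in
/-- Correctness of the greedy algorithm `TS`: starting from the full set of attributes
and greedily removing attributes while the tree-specific condition `C` still holds,
the result satisfies `C` and is subset-minimal with this property, i.e. it is a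
tree-specific explanation for `x` given the boosted tree. -/
theorem stmt14 {n m : ℕ} (hn : 1 ≤ n) (hm : 2 ≤ m) (D : Fin n → Type*)
    [∀ i, Fintype (D i)] [∀ i, Nonempty (D i)]
    (p : Fin m → ℕ)
    (w : (j : Fin m) → Fin (p j) → ((i : Fin n) → D i) → ℝ)
    (x : (i : Fin n) → D i) (i : Fin m)
    (hclass : ∀ j, j ≠ i → (∑ k, w j k x) < ∑ k, w i k x)
    (C : Finset (Fin n) → Prop)
    (hC : ∀ S : Finset (Fin n), C S ↔ ∀ j, j ≠ i →
      (∑ k, sSup (w j k '' extSetF x S)) < ∑ k, sInf (w i k '' extSetF x S))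
    (l : List (Fin n)) (hl : ∀ a : Fin n, a ∈ l)
    (t : Finset (Fin n))
    (ht : t = List.foldl (fun t c => if C (t.erase c) then t.erase c else t)
      (Finset.univ : Finset (Fin n)) l) :
    C t ∧ ∀ t' : Finset (Fin n), t' ⊂ t → ¬ C t' := by
  have hxmem : ∀ S : Finset (Fin n), x ∈ extSetF x S := fun S i hi => rfl
  -- monotonicity of C
  have mono : ∀ ⦃S T : Finset (Fin n)⦄, S ⊆ T → C S → C T := by
    intro S T hST hCS
    rw [hC] at hCS ⊢
    intro j hj
    have hsub : extSetF x T ⊆ extSetF x S := fun x' h i hi => h i (hST hi)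
    have hsup : ∀ (j' : Fin m) (k : Fin (p j')),
        sSup (w j' k '' extSetF x T) ≤ sSup (w j' k '' extSetF x S) := by
      intro j' k
      exact csSup_le_csSup (Set.Finite.bddAbove (Set.toFinite _))
        ⟨w j' k x, ⟨x, hxmem T, rfl⟩⟩ (Set.image_mono hsub)
    have hinf : ∀ (j' : Fin m) (k : Fin (p j')),
        sInf (w j' k '' extSetF x S) ≤ sInf (w j' k '' extSetF x T) := by
      intro j' k
      exact csInf_le_csInf (Set.Finite.bddBelow (Set.toFinite _))
        ⟨w j' k x, ⟨x, hxmem T, rfl⟩⟩ (Set.image_mono hsub)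
    calc ∑ k, sSup (w j k '' extSetF x T) ≤ ∑ k, sSup (w j k '' extSetF x S) :=
          Finset.sum_le_sum (fun k _ => hsup j k)
      _ < ∑ k, sInf (w i k '' extSetF x S) := hCS j hj
      _ ≤ ∑ k, sInf (w i k '' extSetF x T) := Finset.sum_le_sum (fun k _ => hinf i k)
  -- C univ
  have hext : extSetF x Finset.univ = {x} := by
    ext x'
    constructor
    · intro h; exact funext fun i => h i (Finset.mem_univ i)
    · rintro rfl; exact hxmem _
  have hCuniv : C (Finset.univ : Finset (Fin n)) := by
    rw [hC]
    intro j hj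
    simp only [hext, Set.image_singleton, csSup_singleton, csInf_singleton]
    exact hclass j hj
  obtain ⟨h1, h2, h3⟩ := greedy_aux C mono l Finset.univ hCuniv
  rw [← ht] at h1 h2 h3
  refine ⟨h1, ?_⟩
  intro t' ht' hCt'
  obtain ⟨c, hct, hct'⟩ := Finset.exists_of_ssubset ht'
  have hsub : t' ⊆ t.erase c := fun a ha =>
    Finset.mem_erase.mpr ⟨fun h => hct' (h ▸ ha), ht'.subset ha⟩
  exact h3 c (hl c) hct (mono hsub hCt')
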